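/- Fix $i \geq 0$. There exist $\mathbb{F}_q$-linear maps $\mathcal{Q}^m : H^i(G, R) \to H^i(G, R)$ for all $m \geq 0$, with $\mathcal{Q}^0$ the identity, such that for every $s \in S$ and every $\alpha \in H^i(G, R)$ one has the Cartan-type formula $\mathcal{Q}^m(s\alpha) = \sum_{a+b=m} \mathcal{P}^a(s)\,\mathcal{Q}^b(\alpha)$. -/

import Mathlib

set_option linter.unusedSectionVars false

open MvPolynomial

noncomputable section

variable (𝔽 : Type) [Field 𝔽] [Fintype 𝔽] [DecidableEq 𝔽] (d : ℕ)

/-- The polynomial ring `R = 𝔽_q[V] = Sym(V^*)`, realized as a polynomial ring in `d`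
variables (the variables `X i` forming a basis of `V^*`). -/
abbrev PolyR := MvPolynomial (Fin d) 𝔽

/-- The linear form in `V^* ⊆ R` with coefficient vector `c`. -/
def linForm (c : Fin d → 𝔽) : PolyR 𝔽 d := ∑ i, MvPolynomial.C (c i) * X i

/-- The action of `g ∈ GL(V)` on `R = Sym(V^*)`, induced by the (contragredient) action
of `GL(V)` on linear forms: the linear form with coefficient vector `c` is sent to the
linear form with coefficient vector `c ⬝ g⁻¹`. -/
def glAct (g : GL (Fin d) 𝔽) : PolyR 𝔽 d →ₐ[𝔽] PolyR 𝔽 d :=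
  aeval fun i => linForm 𝔽 d fun j => ((g⁻¹ : GL (Fin d) 𝔽) : Matrix (Fin d) (Fin d) 𝔽) i j

lemma glAct_one : glAct 𝔽 d 1 = AlgHom.id 𝔽 (PolyR 𝔽 d) := by
  apply MvPolynomial.algHom_ext
  intro i
  simp [glAct, linForm, Matrix.one_apply, apply_ite MvPolynomial.C, ite_mul,
    Finset.sum_ite_eq]

lemma glAct_mul (g h : GL (Fin d) 𝔽) :
    glAct 𝔽 d (g * h) = (glAct 𝔽 d g).comp (glAct 𝔽 d h) := by
  apply MvPolynomial.algHom_ext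
  intro i
  simp only [glAct, aeval_X, AlgHom.comp_apply, linForm, map_sum, map_mul, aeval_C, aeval_X,
    mul_inv_rev, Units.val_mul, Matrix.mul_apply, algebraMap_eq, Finset.mul_sum, C_mul,
    Finset.sum_mul]
  rw [Finset.sum_comm]
  simp [mul_assoc]

variable (G : Subgroup (GL (Fin d) 𝔽))

/-- The invariant ring `S = R^G`. -/
def invS : Subalgebra 𝔽 (PolyR 𝔽 d) :=
  ⨅ g ∈ G, AlgHom.equalizer (glAct 𝔽 d g) (AlgHom.id 𝔽 (PolyR 𝔽 d))

lemma mem_invS (r : PolyR 𝔽 d) : r ∈ invS 𝔽 d G ↔ ∀ g ∈ G, glAct 𝔽 d g r = r := by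
  simp [invS, Algebra.mem_iInf, AlgHom.mem_equalizer]

/-- `R` as a representation of `G` over `S = R^G` (the `G`-action on `R` is `S`-linear). -/
def invRep : Representation (invS 𝔽 d G) G (PolyR 𝔽 d) where
  toFun g :=
    { toFun := glAct 𝔽 d g
      map_add' := by simp
      map_smul' := by
        intro s r
        have hs : glAct 𝔽 d (g : GL (Fin d) 𝔽) (s : PolyR 𝔽 d) = (s : PolyR 𝔽 d) :=
          (mem_invS 𝔽 d G _).mp s.2 g g.2
        simp only [Algebra.smul_def, map_mul, RingHom.id_apply]
        rw [show (algebraMap (invS 𝔽 d G) (PolyR 𝔽 d)) s = (s : PolyR 𝔽 d) from rfl, hs] }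
  map_one' := LinearMap.ext fun r => by
    show glAct 𝔽 d ((1 : G) : GL (Fin d) 𝔽) r = r
    rw [OneMemClass.coe_one, glAct_one]
    rfl
  map_mul' := fun g h => LinearMap.ext fun r => by
    show glAct 𝔽 d ((g * h : G) : GL (Fin d) 𝔽) r = glAct 𝔽 d g (glAct 𝔽 d h r)
    rw [MulMemClass.coe_mul, glAct_mul]
    rfl

/-- The `i`-th group cohomology `H^i(G, R)`, as a module over `S = R^G`. -/
def cohGR (i : ℕ) : ModuleCat (invS 𝔽 d G) := groupCohomology (Rep.of (invRep 𝔽 d G)) i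

/-- `J_i`, the annihilator of `H^i(G, R)` in `S`. -/
def annJ (i : ℕ) : Ideal (invS 𝔽 d G) := Module.annihilator (invS 𝔽 d G) (cohGR 𝔽 d G i)

/-- The top Dickson class `𝐝_{d,0} = ∏_{0 ≠ v ∈ V^*} v ∈ R`. -/
def dickson : PolyR 𝔽 d := ∏ c ∈ Finset.univ.filter (fun c : Fin d → 𝔽 => c ≠ 0), linForm 𝔽 d c


lemma glAct_linForm (g : GL (Fin d) 𝔽) (c : Fin d → 𝔽) :
    glAct 𝔽 d g (linForm 𝔽 d c) =
      linForm 𝔽 d (Matrix.vecMul c ((g⁻¹ : GL (Fin d) 𝔽) : Matrix (Fin d) (Fin d) 𝔽)) := by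
  simp only [glAct, linForm, map_sum, map_mul, aeval_C, aeval_X, algebraMap_eq,
    Matrix.vecMul, dotProduct, map_sum, C_mul, Finset.mul_sum, Finset.sum_mul]
  rw [Finset.sum_comm]
  simp [mul_assoc]

lemma glAct_dickson (g : GL (Fin d) 𝔽) : glAct 𝔽 d g (dickson 𝔽 d) = dickson 𝔽 d := by
  unfold dickson
  rw [map_prod]
  simp only [glAct_linForm]
  refine Finset.prod_bij'
    (fun c _ => Matrix.vecMul c ((g⁻¹ : GL (Fin d) 𝔽) : Matrix (Fin d) (Fin d) 𝔽))
    (fun c _ => Matrix.vecMul c ((g : GL (Fin d) 𝔽) : Matrix (Fin d) (Fin d) 𝔽))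
    ?_ ?_ ?_ ?_ ?_
  · intro c hc
    simp only [Finset.mem_filter, Finset.mem_univ, true_and] at hc ⊢
    intro h0
    apply hc
    have h2 := congrArg
      (fun v => Matrix.vecMul v ((g : GL (Fin d) 𝔽) : Matrix (Fin d) (Fin d) 𝔽)) h0
    simp only [Matrix.vecMul_vecMul, Matrix.zero_vecMul, ← Units.val_mul, inv_mul_cancel,
      Units.val_one, Matrix.vecMul_one] at h2
    exact h2
  · intro c hc
    simp only [Finset.mem_filter, Finset.mem_univ, true_and] at hc ⊢
    intro h0
    apply hc
    have h2 := congrArg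
      (fun v => Matrix.vecMul v ((g⁻¹ : GL (Fin d) 𝔽) : Matrix (Fin d) (Fin d) 𝔽)) h0
    simp only [Matrix.vecMul_vecMul, Matrix.zero_vecMul, ← Units.val_mul, mul_inv_cancel,
      Units.val_one, Matrix.vecMul_one] at h2
    exact h2
  · intro c hc
    simp only [Matrix.vecMul_vecMul, ← Units.val_mul, inv_mul_cancel, Units.val_one,
      Matrix.vecMul_one]
  · intro c hc
    simp only [Matrix.vecMul_vecMul, ← Units.val_mul, mul_inv_cancel, Units.val_one,
      Matrix.vecMul_one]
  · intro c hc
    rfl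

/-- The top Dickson class as an element of the invariant ring `S = R^G`. -/
def dicksonS : invS 𝔽 d G :=
  ⟨dickson 𝔽 d, (mem_invS 𝔽 d G _).mpr fun g _ => glAct_dickson 𝔽 d g⟩

/-- The total Steenrod operation `P(ξ) : R → R[ξ]`, the `𝔽_q`-algebra homomorphism
determined by `P(ξ)(v) = v + v^q ξ` for linear forms `v` (here on the basis `X i`). -/
def steenrodTotal : PolyR 𝔽 d →ₐ[𝔽] Polynomial (PolyR 𝔽 d) :=
  aeval fun i =>
    Polynomial.C (X i) + Polynomial.C ((X i : PolyR 𝔽 d) ^ Fintype.card 𝔽) * Polynomial.X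

/-- The Steenrod reduced power operation `𝒫^m : R → R`, defined by
`P(ξ)(f) = ∑ᵢ 𝒫^i(f) ξ^i`. -/
def steenrodP (m : ℕ) (f : PolyR 𝔽 d) : PolyR 𝔽 d := (steenrodTotal 𝔽 d f).coeff m

lemma linForm_pow_card (c : Fin d → 𝔽) :
    (linForm 𝔽 d c) ^ Fintype.card 𝔽 =
      ∑ j, MvPolynomial.C (c j) * (X j : PolyR 𝔽 d) ^ Fintype.card 𝔽 := by
  obtain ⟨n, hp, hcard⟩ := FiniteField.card 𝔽 (ringChar 𝔽)
  haveI : Fact (ringChar 𝔽).Prime := ⟨hp⟩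
  haveI : ExpChar (PolyR 𝔽 d) (ringChar 𝔽) := .prime hp
  have h := map_sum (iterateFrobenius (PolyR 𝔽 d) (ringChar 𝔽) n)
    (fun i => MvPolynomial.C (c i) * X i) Finset.univ
  simp only [iterateFrobenius_def] at h
  rw [linForm, hcard, h]
  refine Finset.sum_congr rfl fun j _ => ?_
  rw [mul_pow, ← map_pow, ← hcard, FiniteField.pow_card]

lemma steenrodTotal_linForm (c : Fin d → 𝔽) :
    steenrodTotal 𝔽 d (linForm 𝔽 d c) =
      Polynomial.C (linForm 𝔽 d c) +
        Polynomial.C ((linForm 𝔽 d c) ^ Fintype.card 𝔽) * Polynomial.X := by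
  rw [linForm_pow_card]
  rw [linForm, map_sum]
  simp only [map_mul, steenrodTotal, aeval_C, aeval_X, MvPolynomial.algebraMap_eq,
    Polynomial.algebraMap_apply]
  simp only [mul_add, ← Polynomial.C_mul, Finset.sum_add_distrib, ← mul_assoc, ← Finset.sum_mul,
    ← map_sum]

/-- The total Steenrod operation commutes with the `GL(V)`-action (acting trivially on `ξ`,
i.e. coefficientwise on `R[ξ]`). -/
lemma map_glAct_steenrodTotal (g : GL (Fin d) 𝔽) (r : PolyR 𝔽 d) :
    Polynomial.map (glAct 𝔽 d g).toRingHom (steenrodTotal 𝔽 d r) =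
      steenrodTotal 𝔽 d (glAct 𝔽 d g r) := by
  have key : (Polynomial.mapAlgHom (glAct 𝔽 d g)).comp (steenrodTotal 𝔽 d) =
      (steenrodTotal 𝔽 d).comp (glAct 𝔽 d g) := by
    apply MvPolynomial.algHom_ext
    intro i
    simp only [AlgHom.comp_apply, steenrodTotal, aeval_X]
    rw [show (Polynomial.mapAlgHom (glAct 𝔽 d g))
          (Polynomial.C (X i) + Polynomial.C ((X i : PolyR 𝔽 d) ^ Fintype.card 𝔽) * Polynomial.X)
        = Polynomial.map (glAct 𝔽 d g).toRingHom
          (Polynomial.C (X i) + Polynomial.C ((X i : PolyR 𝔽 d) ^ Fintype.card 𝔽) * Polynomial.X)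
        from rfl]
    simp only [Polynomial.map_add, Polynomial.map_mul, Polynomial.map_C, Polynomial.map_X]
    show Polynomial.C (glAct 𝔽 d g (X i)) +
        Polynomial.C (glAct 𝔽 d g ((X i : PolyR 𝔽 d) ^ Fintype.card 𝔽)) * Polynomial.X =
      (steenrodTotal 𝔽 d) (glAct 𝔽 d g (X i))
    rw [map_pow, show glAct 𝔽 d g (X i) =
        linForm 𝔽 d fun j => ((g⁻¹ : GL (Fin d) 𝔽) : Matrix (Fin d) (Fin d) 𝔽) i j from
      aeval_X _ i]
    rw [steenrodTotal_linForm]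
  exact congrFun (congrArg (fun φ => φ.toFun) key) r

/-- The Steenrod operations preserve the invariant ring. -/
lemma steenrodP_mem_invS (G : Subgroup (GL (Fin d) 𝔽)) (m : ℕ) (s : PolyR 𝔽 d)
    (hs : s ∈ invS 𝔽 d G) : steenrodP 𝔽 d m s ∈ invS 𝔽 d G := by
  rw [mem_invS] at hs ⊢
  intro g hg
  have h1 := map_glAct_steenrodTotal 𝔽 d g s
  rw [hs g hg] at h1
  have h2 : glAct 𝔽 d g (steenrodP 𝔽 d m s) =
      (Polynomial.map (glAct 𝔽 d g).toRingHom (steenrodTotal 𝔽 d s)).coeff m := by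
    rw [Polynomial.coeff_map]
    rfl
  rw [h2, h1]
  rfl

/-- The Steenrod operation `𝒫^m` restricted to the invariant ring `S = R^G`. -/
def steenrodPS (m : ℕ) (s : invS 𝔽 d G) : invS 𝔽 d G :=
  ⟨steenrodP 𝔽 d m (s : PolyR 𝔽 d), steenrodP_mem_invS 𝔽 d G m _ s.2⟩

open CategoryTheory

set_option maxHeartbeats 1000000
set_option synthInstance.maxHeartbeats 400000

lemma steenrodP_add (m : ℕ) (x y : PolyR 𝔽 d) :
    steenrodP 𝔽 d m (x + y) = steenrodP 𝔽 d m x + steenrodP 𝔽 d m y := by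
  simp [steenrodP, map_add]

lemma steenrodP_zero (m : ℕ) : steenrodP 𝔽 d m 0 = 0 := by
  simp [steenrodP]

/-- `𝒫^m` as an additive monoid hom. -/
def steenrodAddHom (m : ℕ) : PolyR 𝔽 d →+ PolyR 𝔽 d where
  toFun := steenrodP 𝔽 d m
  map_zero' := steenrodP_zero 𝔽 d m
  map_add' := steenrodP_add 𝔽 d m

lemma steenrodP_glAct (m : ℕ) (g : GL (Fin d) 𝔽) (r : PolyR 𝔽 d) :
    steenrodP 𝔽 d m (glAct 𝔽 d g r) = glAct 𝔽 d g (steenrodP 𝔽 d m r) := by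
  have h := congrArg (fun p => Polynomial.coeff p m) (map_glAct_steenrodTotal 𝔽 d g r)
  simp only [Polynomial.coeff_map] at h
  exact h.symm

lemma steenrodTotal_C (c : 𝔽) :
    steenrodTotal 𝔽 d (MvPolynomial.C c) = Polynomial.C (MvPolynomial.C c) := by
  rw [show (MvPolynomial.C c : PolyR 𝔽 d) = algebraMap 𝔽 (PolyR 𝔽 d) c from rfl,
    AlgHom.commutes, Polynomial.algebraMap_apply]

lemma steenrodP_C_mul (m : ℕ) (c : 𝔽) (x : PolyR 𝔽 d) :
    steenrodP 𝔽 d m (MvPolynomial.C c * x) = MvPolynomial.C c * steenrodP 𝔽 d m x := by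
  unfold steenrodP
  rw [map_mul, steenrodTotal_C, Polynomial.coeff_C_mul]

lemma steenrodP_mul (m : ℕ) (x y : PolyR 𝔽 d) :
    steenrodP 𝔽 d m (x * y) =
      ∑ ab ∈ Finset.HasAntidiagonal.antidiagonal m, steenrodP 𝔽 d ab.1 x * steenrodP 𝔽 d ab.2 y := by
  unfold steenrodP
  rw [map_mul, Polynomial.coeff_mul]

lemma steenrodP_zeroth (x : PolyR 𝔽 d) : steenrodP 𝔽 d 0 x = x := by
  have key : (Polynomial.constantCoeff.comp (steenrodTotal 𝔽 d).toRingHom) =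
      RingHom.id (PolyR 𝔽 d) := by
    apply MvPolynomial.ringHom_ext
    · intro c
      simp [steenrodTotal_C, Polynomial.constantCoeff_apply]
    · intro j
      simp [steenrodTotal, Polynomial.constantCoeff_apply]
  have h := congrArg (fun f : (PolyR 𝔽 d) →+* (PolyR 𝔽 d) => f x) key
  simpa [steenrodP, Polynomial.constantCoeff_apply] using h

lemma invS_smul_def (s : invS 𝔽 d G) (x : PolyR 𝔽 d) :
    s • x = (s : PolyR 𝔽 d) * x := by
  rw [Algebra.smul_def]
  rfl

lemma steenrodP_invS_smul (m : ℕ) (s : invS 𝔽 d G) (x : PolyR 𝔽 d) :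
    steenrodP 𝔽 d m (s • x) =
      ∑ ab ∈ Finset.HasAntidiagonal.antidiagonal m,
        (steenrodPS 𝔽 d G ab.1 s : PolyR 𝔽 d) * steenrodP 𝔽 d ab.2 x := by
  rw [invS_smul_def, steenrodP_mul]
  rfl

lemma steenrodP_neg_one_pow_smul (m e : ℕ) (x : PolyR 𝔽 d) :
    steenrodP 𝔽 d m (((-1 : invS 𝔽 d G) ^ e) • x) =
      ((-1 : invS 𝔽 d G) ^ e) • steenrodP 𝔽 d m x := by
  have hc : (((((-1 : invS 𝔽 d G) ^ e) : invS 𝔽 d G)) : PolyR 𝔽 d) =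
      MvPolynomial.C ((-1 : 𝔽) ^ e) := by
    push_cast
    simp [map_pow]
  rw [invS_smul_def, invS_smul_def, hc, steenrodP_C_mul]

/-- The cochain-level Steenrod operation. -/
def steenrodCochain (m n : ℕ) :
    ((Fin n → G) → PolyR 𝔽 d) →+ ((Fin n → G) → PolyR 𝔽 d) where
  toFun φ := fun x => steenrodP 𝔽 d m (φ x)
  map_zero' := by
    funext x
    simp [steenrodP_zero]
  map_add' φ ψ := by
    funext x
    simp [steenrodP_add]

lemma steenrodCochain_apply (m n : ℕ) (φ : (Fin n → G) → PolyR 𝔽 d) (x : Fin n → G) :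
    steenrodCochain 𝔽 d G m n φ x = steenrodP 𝔽 d m (φ x) := rfl

/-- The inhomogeneous differential, written out with values in `PolyR`. -/
lemma d_formula (n : ℕ) (φ : (Fin n → G) → PolyR 𝔽 d) (g : Fin (n + 1) → G) :
    inhomogeneousCochains.d (Rep.of (invRep 𝔽 d G)) n φ g =
      glAct 𝔽 d ((g 0 : GL (Fin d) 𝔽)) (φ fun i => g i.succ) +
        Finset.univ.sum fun j : Fin (n + 1) =>
          ((-1 : invS 𝔽 d G) ^ ((j : ℕ) + 1)) • φ (Fin.contractNth j (· * ·) g) := rfl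

lemma steenrodCochain_d (m n : ℕ) (φ : (Fin n → G) → PolyR 𝔽 d) :
    inhomogeneousCochains.d (Rep.of (invRep 𝔽 d G)) n (steenrodCochain 𝔽 d G m n φ) =
      steenrodCochain 𝔽 d G m (n + 1)
        (inhomogeneousCochains.d (Rep.of (invRep 𝔽 d G)) n φ) := by
  funext g
  rw [steenrodCochain_apply, d_formula, d_formula, steenrodP_add, steenrodCochain_apply,
    steenrodP_glAct]
  congr 1
  rw [show (steenrodP 𝔽 d m (Finset.univ.sum fun j : Fin (n + 1) =>
        ((-1 : invS 𝔽 d G) ^ ((j : ℕ) + 1)) • φ (Fin.contractNth j (· * ·) g)))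
      = Finset.univ.sum fun j : Fin (n + 1) => steenrodP 𝔽 d m
          (((-1 : invS 𝔽 d G) ^ ((j : ℕ) + 1)) • φ (Fin.contractNth j (· * ·) g)) from
    map_sum (steenrodAddHom 𝔽 d m) _ _]
  refine Finset.sum_congr rfl fun j _ => ?_
  rw [steenrodCochain_apply, steenrodP_neg_one_pow_smul]

/-- The inhomogeneous cochain complex of `R` as a `G`-representation over `S`. -/
noncomputable abbrev cochainCx : CochainComplex (ModuleCat (invS 𝔽 d G)) ℕ :=
  groupCohomology.inhomogeneousCochains (Rep.of (invRep 𝔽 d G))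

lemma steenrodCochain_Kd (m j n : ℕ) (φ : (Fin j → G) → PolyR 𝔽 d) :
    ((cochainCx 𝔽 d G).d j n) (steenrodCochain 𝔽 d G m j φ) =
      steenrodCochain 𝔽 d G m n (((cochainCx 𝔽 d G).d j n) φ) := by
  by_cases h : j + 1 = n
  · subst h
    rw [groupCohomology.inhomogeneousCochains.d_def]
    exact steenrodCochain_d 𝔽 d G m j φ
  · rw [HomologicalComplex.shape _ j n (by simpa using h)]
    rw [show ((0 : (cochainCx 𝔽 d G).X j ⟶ (cochainCx 𝔽 d G).X n))
        ((steenrodCochain 𝔽 d G m j) φ) = 0 from rfl,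
      show ((0 : (cochainCx 𝔽 d G).X j ⟶ (cochainCx 𝔽 d G).X n)) φ = 0 from rfl,
      map_zero]

/-- The short complex computing `H^i`. -/
noncomputable abbrev scAt (i : ℕ) : ShortComplex (ModuleCat (invS 𝔽 d G)) :=
  (cochainCx 𝔽 d G).sc i

/-- The Steenrod operation on cocycles. -/
def Tz (m i : ℕ) :
    LinearMap.ker (scAt 𝔽 d G i).g.hom →+ LinearMap.ker (scAt 𝔽 d G i).g.hom where
  toFun z := ⟨steenrodCochain 𝔽 d G m i z.1, by
    have hz : ((cochainCx 𝔽 d G).d i ((ComplexShape.up ℕ).next i)) z.1 = 0 := z.2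
    have h := steenrodCochain_Kd 𝔽 d G m i ((ComplexShape.up ℕ).next i) z.1
    show ((cochainCx 𝔽 d G).d i ((ComplexShape.up ℕ).next i))
      (steenrodCochain 𝔽 d G m i z.1) = 0
    rw [h, hz, map_zero]⟩
  map_zero' := Subtype.ext (map_zero (steenrodCochain 𝔽 d G m i))
  map_add' x y := Subtype.ext (map_add (steenrodCochain 𝔽 d G m i) x.1 y.1)

lemma Tz_boundaries (m i : ℕ) (x : LinearMap.ker (scAt 𝔽 d G i).g.hom)
    (hx : x ∈ LinearMap.range (scAt 𝔽 d G i).moduleCatToCycles) :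
    Tz 𝔽 d G m i x ∈ LinearMap.range (scAt 𝔽 d G i).moduleCatToCycles := by
  obtain ⟨y, rfl⟩ := hx
  refine ⟨steenrodCochain 𝔽 d G m ((ComplexShape.up ℕ).prev i) y, ?_⟩
  apply Subtype.ext
  show (scAt 𝔽 d G i).f (steenrodCochain 𝔽 d G m _ y) =
    steenrodCochain 𝔽 d G m i ((scAt 𝔽 d G i).f y)
  exact steenrodCochain_Kd 𝔽 d G m ((ComplexShape.up ℕ).prev i) i y

/-- An additive endomorphism of a module descends to the quotient by an invariant submodule. -/
def quotAddHom {R M : Type*} [Ring R] [AddCommGroup M] [Module R M] (p : Submodule R M)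
    (T : M →+ M) (hT : ∀ x ∈ p, T x ∈ p) : (M ⧸ p) →+ (M ⧸ p) where
  toFun := Quotient.lift (fun x => Submodule.Quotient.mk (T x)) (by
    intro a b hab
    have h1 : a - b ∈ p := by rwa [← Submodule.quotientRel_def (p := p)]
    have h2 : T a - T b ∈ p := by rw [← map_sub]; exact hT _ h1
    exact (Submodule.Quotient.eq p).2 h2)
  map_zero' := by
    show Submodule.Quotient.mk (T 0) = 0
    rw [map_zero]
    rfl
  map_add' a b := by
    refine Quotient.inductionOn₂ a b fun x y => ?_
    show Submodule.Quotient.mk (T (x + y)) =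
      Submodule.Quotient.mk (T x) + Submodule.Quotient.mk (T y)
    rw [map_add, Submodule.Quotient.mk_add]

lemma quotAddHom_mk {R M : Type*} [Ring R] [AddCommGroup M] [Module R M] (p : Submodule R M)
    (T : M →+ M) (hT : ∀ x ∈ p, T x ∈ p) (x : M) :
    quotAddHom p T hT (Submodule.Quotient.mk x) = Submodule.Quotient.mk (T x) := rfl

/-- The projection from cocycles to cohomology, through the concrete description of the
homology of a short complex of modules. -/
noncomputable def iotaH (i : ℕ) :
    LinearMap.ker (scAt 𝔽 d G i).g.hom →ₗ[invS 𝔽 d G] cohGR 𝔽 d G i :=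
  LinearMap.comp ((scAt 𝔽 d G i).moduleCatHomologyIso.inv.hom)
    (LinearMap.range (scAt 𝔽 d G i).moduleCatToCycles).mkQ

lemma iotaH_apply (i : ℕ) (z : LinearMap.ker (scAt 𝔽 d G i).g.hom) :
    iotaH 𝔽 d G i z =
      (scAt 𝔽 d G i).moduleCatHomologyIso.inv (Submodule.Quotient.mk z) := rfl

lemma iotaH_surjective (i : ℕ) : Function.Surjective (iotaH 𝔽 d G i) := by
  intro α
  obtain ⟨z, hz⟩ := Submodule.mkQ_surjective
    (LinearMap.range (scAt 𝔽 d G i).moduleCatToCycles)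
    ((scAt 𝔽 d G i).moduleCatHomologyIso.hom α)
  refine ⟨z, ?_⟩
  have hcomp : LinearMap.comp (scAt 𝔽 d G i).moduleCatHomologyIso.inv.hom
      (scAt 𝔽 d G i).moduleCatHomologyIso.hom.hom = LinearMap.id := by
    rw [← ModuleCat.hom_comp, Iso.hom_inv_id, ModuleCat.hom_id]
  rw [iotaH_apply, show Submodule.Quotient.mk z
    = (LinearMap.range (scAt 𝔽 d G i).moduleCatToCycles).mkQ z from rfl, hz]
  exact LinearMap.congr_fun hcomp α

/-- The Steenrod operation `𝒬^m` on `H^i(G, R)`. -/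
noncomputable def Qmap (i m : ℕ) : (cohGR 𝔽 d G i) →+ (cohGR 𝔽 d G i) :=
  (((scAt 𝔽 d G i).moduleCatHomologyIso.inv.hom).toAddMonoidHom).comp
    ((quotAddHom _ (Tz 𝔽 d G m i) (Tz_boundaries 𝔽 d G m i)).comp
      (((scAt 𝔽 d G i).moduleCatHomologyIso.hom.hom).toAddMonoidHom))

lemma Qmap_iotaH (i m : ℕ) (z : LinearMap.ker (scAt 𝔽 d G i).g.hom) :
    Qmap 𝔽 d G i m (iotaH 𝔽 d G i z) = iotaH 𝔽 d G i (Tz 𝔽 d G m i z) := by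
  have hcomp : LinearMap.comp (scAt 𝔽 d G i).moduleCatHomologyIso.hom.hom
      (scAt 𝔽 d G i).moduleCatHomologyIso.inv.hom = LinearMap.id := by
    rw [← ModuleCat.hom_comp, Iso.inv_hom_id, ModuleCat.hom_id]
  show (scAt 𝔽 d G i).moduleCatHomologyIso.inv
      ((quotAddHom _ (Tz 𝔽 d G m i) (Tz_boundaries 𝔽 d G m i))
        ((scAt 𝔽 d G i).moduleCatHomologyIso.hom
          ((scAt 𝔽 d G i).moduleCatHomologyIso.inv (Submodule.Quotient.mk z)))) =
    (scAt 𝔽 d G i).moduleCatHomologyIso.inv (Submodule.Quotient.mk (Tz 𝔽 d G m i z))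
  rw [show (scAt 𝔽 d G i).moduleCatHomologyIso.hom
        ((scAt 𝔽 d G i).moduleCatHomologyIso.inv (Submodule.Quotient.mk z))
      = Submodule.Quotient.mk z from LinearMap.congr_fun hcomp _,
    quotAddHom_mk]

lemma Tz_smul (m i : ℕ) (s : invS 𝔽 d G) (z : LinearMap.ker (scAt 𝔽 d G i).g.hom) :
    Tz 𝔽 d G m i (s • z) =
      ∑ ab ∈ Finset.HasAntidiagonal.antidiagonal m, steenrodPS 𝔽 d G ab.1 s • Tz 𝔽 d G ab.2 i z := by
  set L := (LinearMap.ker (scAt 𝔽 d G i).g.hom).subtype with hL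
  have key : L (Tz 𝔽 d G m i (s • z)) =
      L (∑ ab ∈ Finset.HasAntidiagonal.antidiagonal m, steenrodPS 𝔽 d G ab.1 s • Tz 𝔽 d G ab.2 i z) := by
    have lhs : L (Tz 𝔽 d G m i (s • z)) = steenrodCochain 𝔽 d G m i (L (s • z)) := rfl
    rw [lhs, map_smul, map_sum]
    simp only [map_smul]
    funext x
    rw [show steenrodCochain 𝔽 d G m i (s • L z) x
        = steenrodP 𝔽 d m (s • (L z x)) from rfl,
      steenrodP_invS_smul]
    erw [Finset.sum_apply]
    refine Finset.sum_congr rfl fun ab _ => ?_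
    erw [Pi.smul_apply, show L (Tz 𝔽 d G ab.2 i z) x = steenrodP 𝔽 d ab.2 (L z x) from rfl,
      invS_smul_def]
  exact Subtype.ext key

lemma Tz_algSmul (m i : ℕ) (c : 𝔽) (z : LinearMap.ker (scAt 𝔽 d G i).g.hom) :
    Tz 𝔽 d G m i (algebraMap 𝔽 (invS 𝔽 d G) c • z) =
      algebraMap 𝔽 (invS 𝔽 d G) c • Tz 𝔽 d G m i z := by
  set L := (LinearMap.ker (scAt 𝔽 d G i).g.hom).subtype with hL
  have hcoe : ((algebraMap 𝔽 (invS 𝔽 d G) c : invS 𝔽 d G) : PolyR 𝔽 d)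
      = MvPolynomial.C c := by
    rw [Subalgebra.coe_algebraMap, MvPolynomial.algebraMap_eq]
  have key : L (Tz 𝔽 d G m i (algebraMap 𝔽 (invS 𝔽 d G) c • z)) =
      L (algebraMap 𝔽 (invS 𝔽 d G) c • Tz 𝔽 d G m i z) := by
    have lhs : L (Tz 𝔽 d G m i (algebraMap 𝔽 (invS 𝔽 d G) c • z))
        = steenrodCochain 𝔽 d G m i (L (algebraMap 𝔽 (invS 𝔽 d G) c • z)) := rfl
    have rhs : L (algebraMap 𝔽 (invS 𝔽 d G) c • Tz 𝔽 d G m i z)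
        = algebraMap 𝔽 (invS 𝔽 d G) c • steenrodCochain 𝔽 d G m i (L z) := by
      rw [map_smul]
      rfl
    rw [lhs, rhs, map_smul]
    funext x
    rw [show steenrodCochain 𝔽 d G m i (algebraMap 𝔽 (invS 𝔽 d G) c • L z) x
        = steenrodP 𝔽 d m (algebraMap 𝔽 (invS 𝔽 d G) c • (L z x)) from rfl,
      Pi.smul_apply, invS_smul_def, invS_smul_def, hcoe, steenrodP_C_mul]
    rfl
  exact Subtype.ext key

lemma Tz_zeroth (i : ℕ) (z : LinearMap.ker (scAt 𝔽 d G i).g.hom) :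
    Tz 𝔽 d G 0 i z = z := by
  apply Subtype.ext
  funext x
  exact steenrodP_zeroth 𝔽 d (z.1 x)

/-- **Theorem.** For each `i ≥ 0` there exist `𝔽_q`-linear operators
`𝒬^m : H^i(G, R) → H^i(G, R)` (`m ≥ 0`), with `𝒬^0` the identity, satisfying the
Cartan-type formula `𝒬^m(s • α) = ∑_{a+b=m} 𝒫^a(s) • 𝒬^b(α)` for `s ∈ S`,
`α ∈ H^i(G, R)`. -/
theorem exists_steenrod_operators_on_groupCohomology (i : ℕ) :
    ∃ Q : ℕ → ((cohGR 𝔽 d G i) →+ (cohGR 𝔽 d G i)),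
      Q 0 = AddMonoidHom.id _ ∧
      (∀ (m : ℕ) (c : 𝔽) (α : cohGR 𝔽 d G i),
        Q m (algebraMap 𝔽 (invS 𝔽 d G) c • α) = algebraMap 𝔽 (invS 𝔽 d G) c • Q m α) ∧
      (∀ (m : ℕ) (s : invS 𝔽 d G) (α : cohGR 𝔽 d G i),
        Q m (s • α) = ∑ ab ∈ Finset.HasAntidiagonal.antidiagonal m, steenrodPS 𝔽 d G ab.1 s • Q ab.2 α) := by
  refine ⟨fun m => Qmap 𝔽 d G i m, ?_, ?_, ?_⟩
  · ext α
    obtain ⟨z, rfl⟩ := iotaH_surjective 𝔽 d G i α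
    rw [Qmap_iotaH, Tz_zeroth]
    rfl
  · intro m c α
    obtain ⟨z, rfl⟩ := iotaH_surjective 𝔽 d G i α
    rw [← map_smul, Qmap_iotaH, Qmap_iotaH, Tz_algSmul, map_smul]
  · intro m s α
    obtain ⟨z, rfl⟩ := iotaH_surjective 𝔽 d G i α
    rw [← map_smul, Qmap_iotaH, Tz_smul, map_sum]
    refine Finset.sum_congr rfl fun ab _ => ?_
    rw [map_smul, Qmap_iotaH]

end
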